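/- Let A be a commutative algebra over a commutative ring k, θ ∈ k, and R : A → A a Rota–Baxter operator of weight θ. Fix n ≥ 1 and s₁, …, sₙ ∈ A. Then Σ_{σ ∈ Sₙ} R( s_{σ(1)} R( s_{σ(2)} ⋯ R(s_{σ(n)}) ⋯ ) ) = Σ_{𝒯} θ^{n − |𝒯|} ∏_{T ∈ 𝒯} (|T| − 1)! · R( ∏_{j ∈ T} s_j ), where the right-hand sum runs over all (unordered) set partitions 𝒯 of {1, …, n}, |𝒯| is the number of blocks of 𝒯, and |T| is the size of the block T. (Bohnenblust–Spitzer formula of weight θ.) -/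

import Mathlib

open Finset

variable {k A : Type*} [CommRing k] [CommRing A] [Algebra k A]

/-- The nested Rota–Baxter expression `R(a₁ R(a₂ ⋯ R(aₙ)⋯))` of a list `[a₁, …, aₙ]`. -/
def nestedRB (R : A →ₗ[k] A) : List A → A
  | [] => 1
  | a :: l => R (a * nestedRB R l)

namespace BSaux

set_option linter.unusedSectionVars false
set_option linter.unusedVariables false

/-- All ways of multiplying `c` into one entry of the list. -/
def mergeL (c : A) : List A → List (List A)
  | [] => []
  | a :: l => ((c * a) :: l) :: (mergeL c l).map (a :: ·)

section listlemmas

variable {β : Type*} [AddCommMonoid β]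



lemma sum_map_flatMap {α : Type*} (X : List α) (g : α → List α) (f : α → β) :
    ((X.flatMap g).map f).sum = (X.map (fun x => ((g x).map f).sum)).sum := by
  induction X with
  | nil => simp
  | cons a t ih => simp [List.flatMap_cons, ih]

lemma sum_map_add {α : Type*} (X : List α) (f g : α → β) :
    (X.map (fun x => f x + g x)).sum = (X.map f).sum + (X.map g).sum := by
  induction X with
  | nil => simp
  | cons a t ih => simp only [List.map_cons, List.sum_cons, ih]; abel


lemma flatMap_mergeL_cons_sum (f : List A → β) (b c : A) (X : List (List A)) :
    (((X.map (b :: ·)).flatMap (mergeL c)).map f).sum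
      = ((X.map (fun x => (c * b) :: x)).map f).sum
        + ((X.flatMap (mergeL c)).map (fun m => f (b :: m))).sum := by
  rw [sum_map_flatMap, sum_map_flatMap, List.map_map, List.map_map]
  rw [← sum_map_add]
  refine congrArg List.sum (List.map_congr_left fun x _ => ?_)
  show ((mergeL c (b :: x)).map f).sum = _
  rw [show mergeL c (b :: x) = ((c * b) :: x) :: (mergeL c x).map (b :: ·) from rfl]
  simp [List.map_map, Function.comp_def]

lemma flatMap_insAux_cons_sum (f : List A → β) (a b : A) (X : List (List A)) :
    (((X.map (b :: ·)).flatMap (List.permutations'Aux a)).map f).sum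
      = ((X.map (fun x => a :: b :: x)).map f).sum
        + ((X.flatMap (List.permutations'Aux a)).map (fun m => f (b :: m))).sum := by
  rw [sum_map_flatMap, sum_map_flatMap, List.map_map, List.map_map]
  rw [← sum_map_add]
  refine congrArg List.sum (List.map_congr_left fun x _ => ?_)
  show ((List.permutations'Aux a (b :: x)).map f).sum = _
  rw [show List.permutations'Aux a (b :: x)
      = (a :: b :: x) :: (List.permutations'Aux a x).map (b :: ·) from rfl]
  simp [List.map_map, Function.comp_def]

lemma M1 (f : List A → β) (a c : A) (l : List A) :
    (((List.permutations'Aux a l).flatMap (mergeL c)).map f).sum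
      = ((List.permutations'Aux (c * a) l).map f).sum
        + (((mergeL c l).flatMap (List.permutations'Aux a)).map f).sum := by
  induction l generalizing f with
  | nil => simp [mergeL, List.permutations'Aux]
  | cons b t ih =>
    rw [show List.permutations'Aux a (b :: t)
        = (a :: b :: t) :: (List.permutations'Aux a t).map (b :: ·) from rfl]
    rw [List.flatMap_cons, List.map_append, List.sum_append]
    rw [show mergeL c (a :: b :: t)
        = ((c * a) :: b :: t) :: (a :: (c * b) :: t)
          :: ((mergeL c t).map (b :: ·)).map (a :: ·) from rfl]
    rw [flatMap_mergeL_cons_sum]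
    rw [ih (fun m => f (b :: m))]
    -- RHS side computation
    rw [show List.permutations'Aux (c * a) (b :: t)
        = ((c * a) :: b :: t) :: (List.permutations'Aux (c * a) t).map (b :: ·) from rfl]
    rw [show mergeL c (b :: t) = ((c * b) :: t) :: (mergeL c t).map (b :: ·) from rfl]
    rw [List.flatMap_cons, List.map_append, List.sum_append]
    rw [show List.permutations'Aux a ((c * b) :: t)
        = (a :: (c * b) :: t) :: (List.permutations'Aux a t).map ((c * b) :: ·) from rfl]
    rw [flatMap_insAux_cons_sum]
    simp only [List.map_cons, List.sum_cons, List.map_map, Function.comp_def]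
    abel

lemma M2 (c : A) (f : List A → β) (l : List A) :
    ((l.permutations'.flatMap (mergeL c)).map f).sum
      = ((mergeL c l).map (fun l₂ => ((l₂.permutations').map f).sum)).sum := by
  induction l generalizing f with
  | nil => simp [mergeL, List.permutations']
  | cons a t ih =>
    rw [show (a :: t).permutations' = t.permutations'.flatMap (List.permutations'Aux a) from rfl]
    rw [sum_map_flatMap (t.permutations'.flatMap (List.permutations'Aux a))]
    rw [sum_map_flatMap t.permutations' (List.permutations'Aux a)]
    calc (t.permutations'.map fun x => ((List.permutations'Aux a x).map
              (fun y => ((mergeL c y).map f).sum)).sum).sum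
        = (t.permutations'.map fun x => (((List.permutations'Aux (c*a) x).map f).sum
            + ((mergeL c x).map (fun m => ((List.permutations'Aux a m).map f).sum)).sum)).sum := by
          refine congrArg List.sum (List.map_congr_left fun x _ => ?_)
          rw [← sum_map_flatMap, M1 f a c x, sum_map_flatMap]
      _ = (t.permutations'.map fun x => ((List.permutations'Aux (c*a) x).map f).sum).sum
            + (t.permutations'.map fun x =>
                ((mergeL c x).map (fun m => ((List.permutations'Aux a m).map f).sum)).sum).sum := by
          rw [sum_map_add]
      _ = ((((c*a) :: t).permutations').map f).sum
            + ((t.permutations'.flatMap (mergeL c)).map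
                (fun m => ((List.permutations'Aux a m).map f).sum)).sum := by
          rw [show ((c*a) :: t).permutations'
              = t.permutations'.flatMap (List.permutations'Aux (c*a)) from rfl]
          rw [sum_map_flatMap, sum_map_flatMap]
      _ = ((((c*a) :: t).permutations').map f).sum
            + ((mergeL c t).map (fun l₂ =>
                ((l₂.permutations').map (fun m => ((List.permutations'Aux a m).map f).sum)).sum)).sum := by
          rw [ih]
      _ = ((mergeL c (a :: t)).map (fun l₂ => ((l₂.permutations').map f).sum)).sum := by
          rw [show mergeL c (a :: t) = ((c*a) :: t) :: (mergeL c t).map (a :: ·) from rfl]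
          simp only [List.map_cons, List.sum_cons, List.map_map, Function.comp_def]
          refine congrArg₂ (· + ·) rfl (congrArg List.sum (List.map_congr_left fun l₂ _ => ?_))
          rw [show (a :: l₂).permutations'
              = l₂.permutations'.flatMap (List.permutations'Aux a) from rfl]
          rw [sum_map_flatMap]


end listlemmas

variable (θ : k) (R : A →ₗ[k] A)
variable (hR : ∀ a b : A, R a * R b = R (R a * b) + R (a * R b) - θ • R (a * b))

lemma sum_map_R_mul (a : A) (X : List (List A)) :
    (X.map (fun l' => R (a * nestedRB R l'))).sum = R (a * (X.map (nestedRB R)).sum) := by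
  induction X with
  | nil => simp
  | cons x t ih => simp [ih, mul_add, map_add]

include hR in
/-- Summing the nested expression over all insertions of `c` into `l`. -/
lemma sum_insertions (c : A) (l : List A) :
    ((List.permutations'Aux c l).map (nestedRB R)).sum
      = R c * nestedRB R l + θ • ((mergeL c l).map (nestedRB R)).sum := by
  induction l with
  | nil => simp [nestedRB, mergeL]
  | cons a l ih =>
    have h1 : List.permutations'Aux c (a :: l)
        = (c :: a :: l) :: (List.permutations'Aux c l).map (a :: ·) := rfl
    rw [h1]
    have h2 : ∀ X : List (List A), ((X.map (a :: ·)).map (nestedRB R)).sum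
        = R (a * (X.map (nestedRB R)).sum) := by
      intro X
      rw [List.map_map]
      simpa [Function.comp_def, nestedRB] using sum_map_R_mul R a X
    set M := ((mergeL c l).map (nestedRB R)).sum with hM
    set Nl := nestedRB R l with hNl
    have h3 : nestedRB R ((c*a) :: l) = R ((c * a) * Nl) := rfl
    have h4 : nestedRB R (a :: l) = R (a * Nl) := rfl
    have h5 : nestedRB R (c :: a :: l) = R (c * R (a * Nl)) := rfl
    simp only [List.sum_cons, h2, ih, mergeL, List.map_cons, h3, h4, h5]
    have expand : a * (R c * Nl + θ • M) = a * (R c * Nl) + θ • (a * M) := by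
      rw [mul_add, mul_smul_comm]
    rw [expand, map_add, map_smul]
    have key := hR c (a * Nl)
    have e1 : R (R c * (a * Nl)) = R (a * (R c * Nl)) := by ring_nf
    have e2 : R (c * (a * Nl)) = R (c * a * Nl) := by ring_nf
    rw [e1, e2] at key
    rw [smul_add]
    -- goal: R (c * R (a*Nl)) + (R (a * (R c * Nl)) + θ • R (a * M))
    --     = R c * R (a * Nl) + (θ • R (c*a*Nl) + θ • R (a * M))
    rw [key]
    abel


lemma sum_map_mul_left {α : Type*} (X : List α) (a : A) (f : α → A) :
    (X.map (fun x => a * f x)).sum = a * (X.map f).sum := by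
  induction X with
  | nil => simp
  | cons x t ih => simp [ih, mul_add]

lemma sum_map_smul {α : Type*} (X : List α) (θ : k) (f : α → A) :
    (X.map (fun x => θ • f x)).sum = θ • (X.map f).sum := by
  induction X with
  | nil => simp
  | cons x t ih => simp [ih, smul_add]

/-- Sum of the nested RB expression over all permutations of a list. -/
def Dsum (R : A →ₗ[k] A) (l : List A) : A := ((l.permutations').map (nestedRB R)).sum

lemma Dsum_rec (θ : k) (R : A →ₗ[k] A)
    (hR : ∀ a b : A, R a * R b = R (R a * b) + R (a * R b) - θ • R (a * b))
    (c : A) (l : List A) :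
    Dsum R (c :: l) = R c * Dsum R l + θ • ((mergeL c l).map (Dsum R)).sum := by
  unfold Dsum
  rw [show (c :: l).permutations' = l.permutations'.flatMap (List.permutations'Aux c) from rfl]
  rw [sum_map_flatMap]
  calc (l.permutations'.map fun x => ((List.permutations'Aux c x).map (nestedRB R)).sum).sum
      = (l.permutations'.map fun x => (R c * nestedRB R x
          + θ • ((mergeL c x).map (nestedRB R)).sum)).sum := by
        refine congrArg List.sum (List.map_congr_left fun x _ => ?_)
        exact sum_insertions θ R hR c x
    _ = R c * ((l.permutations').map (nestedRB R)).sum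
          + θ • ((l.permutations'.flatMap (mergeL c)).map (nestedRB R)).sum := by
        rw [sum_map_add, sum_map_mul_left, sum_map_smul, sum_map_flatMap]
    _ = _ := by rw [M2 c (nestedRB R) l]

/-- `mergeL` after mapping a function along a nodup list of indices. -/
lemma mergeL_map {ι : Type*} [DecidableEq ι] (s : ι → A) (c : A) :
    ∀ t : List ι, t.Nodup →
      mergeL c (t.map s) = t.map (fun j => t.map (Function.update s j (c * s j)))
  | [], _ => rfl
  | j :: r, h => by
    obtain ⟨hj, hr⟩ := List.nodup_cons.mp h
    rw [List.map_cons, show mergeL c (s j :: r.map s)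
        = ((c * s j) :: r.map s) :: (mergeL c (r.map s)).map (s j :: ·) from rfl]
    rw [mergeL_map s c r hr, List.map_cons, List.map_map]
    congr 1
    · rw [List.map_cons, Function.update_self]
      congr 1
      exact (List.map_congr_left fun x hx => by
        rw [Function.update_of_ne (by rintro rfl; exact hj hx)]).symm
    · refine List.map_congr_left fun j' hj' => ?_
      rw [Function.comp_apply, List.map_cons,
        Function.update_of_ne (by rintro rfl; exact hj hj') _ s]


lemma perm_multiset (n : ℕ) :
    (Finset.univ.val.map (fun σ : Equiv.Perm (Fin n) => List.ofFn σ))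
      = (↑((List.finRange n).permutations') : Multiset (List (Fin n))) := by
  have h1 : (Finset.univ.val.map (fun σ : Equiv.Perm (Fin n) => List.ofFn σ)).Nodup :=
    Finset.univ.nodup.map (fun σ σ' h => Equiv.coe_fn_injective (List.ofFn_injective h))
  have h2 : ((↑((List.finRange n).permutations') : Multiset (List (Fin n)))).Nodup := by
    rw [Multiset.coe_nodup]
    exact ((List.nodup_permutations _ (List.nodup_finRange n)).perm
      (List.permutations_perm_permutations' _))
  rw [Multiset.Nodup.ext h1 h2]
  intro l
  simp only [Multiset.mem_map, Finset.mem_val, Finset.mem_univ, true_and, Multiset.mem_coe,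
    List.mem_permutations']
  constructor
  · rintro ⟨σ, rfl⟩
    rw [List.ofFn_eq_map]
    exact σ.map_finRange_perm
  · intro h
    have hlen : l.length = n := h.length_eq.trans (List.length_finRange)
    have hnodup : l.Nodup := h.symm.nodup (List.nodup_finRange n)
    have hinj : Function.Injective (fun i : Fin n => l.get (Fin.cast hlen.symm i)) := by
      intro i j hij
      have := (List.nodup_iff_injective_get.mp hnodup) hij
      simpa [Fin.ext_iff] using this
    refine ⟨Equiv.ofBijective _ ((Finite.injective_iff_bijective).mp hinj), ?_⟩
    apply List.ext_getElem (by simp [hlen])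
    intro i h1' h2'
    simp [Equiv.ofBijective, List.getElem_ofFn]


variable {ι : Type*} [DecidableEq ι]

/-- The partition-indexed right-hand side. -/
def Esum (θ : k) (R : A →ₗ[k] A) (S : Finset ι) (s : ι → A) : A :=
  ∑ P : Finpartition S, θ ^ (S.card - P.parts.card) •
    ∏ T ∈ P.parts, (T.card - 1).factorial • R (∏ j ∈ T, s j)

section constructions

variable {m : ι} {S : Finset ι}

/-- Remove the singleton block `{m}` from a partition of `insert m S`. -/
def eraseSingleton (hm : m ∉ S) (P : Finpartition (insert m S)) (hP : {m} ∈ P.parts) :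
    Finpartition S where
  parts := P.parts.erase {m}
  supIndep := P.supIndep.subset (erase_subset _ _)
  sup_parts := by
    apply Finset.ext
    intro a
    rw [Finset.mem_sup]
    constructor
    · rintro ⟨T, hT, haT⟩
      have hTp := Finset.mem_of_mem_erase hT
      have hne := Finset.ne_of_mem_erase hT
      have haS : a ∈ insert m S := P.le hTp haT
      rcases Finset.mem_insert.mp haS with rfl | h
      · exact absurd (P.eq_of_mem_parts hTp hP haT (Finset.mem_singleton_self a)) hne
      · exact h
    · intro ha
      have ha' : a ∈ insert m S := Finset.mem_insert_of_mem ha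
      refine ⟨P.part a, Finset.mem_erase.mpr ⟨?_, P.part_mem.mpr ha'⟩, P.mem_part ha'⟩
      intro h
      have h2 := P.mem_part ha'
      rw [h, Finset.mem_singleton] at h2
      exact hm (h2 ▸ ha)
  bot_notMem := fun h => P.bot_notMem (Finset.mem_of_mem_erase h)

/-- Add the singleton block `{m}` to a partition of `S`. -/
def extSingleton (hm : m ∉ S) (Q : Finpartition S) : Finpartition (insert m S) :=
  Q.extend (b := {m}) (by simp [Finset.bot_eq_empty])
    (by simp [Finset.disjoint_singleton_right, hm])
    (by rw [Finset.sup_eq_union, Finset.union_comm, ← Finset.insert_eq])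

lemma extSingleton_parts (hm : m ∉ S) (Q : Finpartition S) :
    (extSingleton hm Q).parts = insert {m} Q.parts := rfl

lemma not_mem_parts_of_mem {Q : Finpartition S} {T : Finset ι} (hT : T ∈ Q.parts) : T ⊆ S :=
  Q.le hT

lemma singleton_not_mem (hm : m ∉ S) (Q : Finpartition S) : {m} ∉ Q.parts := fun h =>
  hm (Q.le h (Finset.mem_singleton_self m))

/-- Add `m` to the block of `j` in a partition of `S`. -/
def growP (hm : m ∉ S) (Q : Finpartition S) (j : ι) (hj : j ∈ S) :
    Finpartition (insert m S) where
  parts := insert (insert m (Q.part j)) (Q.parts.erase (Q.part j))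
  supIndep := by
    rw [Finset.supIndep_iff_pairwiseDisjoint, Finset.coe_insert]
    refine Set.PairwiseDisjoint.insert
      (Q.disjoint.subset (Finset.coe_subset.mpr (erase_subset _ _))) ?_
    intro T hT _
    rw [Finset.mem_coe, Finset.mem_erase] at hT
    obtain ⟨hTne, hTp⟩ := hT
    have h1 : m ∉ T := fun h => hm (Q.le hTp h)
    have h2 : Disjoint (Q.part j) T := Q.disjoint (Q.part_mem.mpr hj) hTp (Ne.symm hTne)
    show Disjoint (insert m (Q.part j)) T
    simp only [Finset.insert_eq, Finset.disjoint_union_left]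
    exact ⟨Finset.disjoint_singleton_left.mpr h1, h2⟩
  sup_parts := by
    apply Finset.ext
    intro a
    rw [Finset.mem_sup]
    constructor
    · rintro ⟨T, hT, haT⟩
      rcases Finset.mem_insert.mp hT with rfl | hT'
      · rcases Finset.mem_insert.mp haT with rfl | h
        · exact Finset.mem_insert_self a S
        · exact Finset.mem_insert_of_mem (Q.le (Q.part_mem.mpr hj) h)
      · exact Finset.mem_insert_of_mem (Q.le (Finset.mem_of_mem_erase hT') haT)
    · intro ha
      rcases Finset.mem_insert.mp ha with rfl | haS
      · exact ⟨insert a (Q.part j), Finset.mem_insert_self _ _, Finset.mem_insert_self _ _⟩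
      · by_cases hpart : Q.part a = Q.part j
        · exact ⟨insert m (Q.part j), Finset.mem_insert_self _ _,
            Finset.mem_insert_of_mem (hpart ▸ Q.mem_part haS)⟩
        · exact ⟨Q.part a, Finset.mem_insert_of_mem
            (Finset.mem_erase.mpr ⟨hpart, Q.part_mem.mpr haS⟩), Q.mem_part haS⟩
  bot_notMem := by
    intro h
    rcases Finset.mem_insert.mp h with h' | h'
    · exact (Finset.insert_ne_empty _ _) h'.symm
    · exact Q.bot_notMem (Finset.mem_of_mem_erase h')

lemma growP_parts (hm : m ∉ S) (Q : Finpartition S) (j : ι) (hj : j ∈ S) :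
    (growP hm Q j hj).parts = insert (insert m (Q.part j)) (Q.parts.erase (Q.part j)) := rfl

end constructions

variable {m : ι} {S : Finset ι}

lemma erase_part_nonempty (hm : m ∉ S) (P : Finpartition (insert m S))
    (hP : {m} ∉ P.parts) : ((P.part m).erase m).Nonempty := by
  have hB : P.part m ∈ P.parts := P.part_mem.mpr (Finset.mem_insert_self m S)
  rw [Finset.nonempty_iff_ne_empty]
  intro h
  rcases (Finset.erase_eq_empty_iff _ _).mp h with h' | h'
  · exact P.bot_notMem (by rw [Finset.bot_eq_empty, ← h']; exact hB)
  · exact hP (h' ▸ hB)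

/-- Remove `m` from its block in a partition of `insert m S` having no block `{m}`. -/
def shrinkP (hm : m ∉ S) (P : Finpartition (insert m S)) (hP : {m} ∉ P.parts) :
    Finpartition S where
  parts := insert ((P.part m).erase m) (P.parts.erase (P.part m))
  supIndep := by
    rw [Finset.supIndep_iff_pairwiseDisjoint, Finset.coe_insert]
    refine Set.PairwiseDisjoint.insert
      (P.disjoint.subset (Finset.coe_subset.mpr (Finset.erase_subset _ _))) ?_
    intro T hT _
    rw [Finset.mem_coe, Finset.mem_erase] at hT
    obtain ⟨hTne, hTp⟩ := hT
    have h2 : Disjoint (P.part m) T :=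
      P.disjoint (P.part_mem.mpr (Finset.mem_insert_self m S)) hTp (Ne.symm hTne)
    exact Finset.disjoint_of_subset_left (Finset.erase_subset _ _) h2
  sup_parts := by
    have hmB : m ∈ P.part m := P.mem_part (Finset.mem_insert_self m S)
    have hB : P.part m ∈ P.parts := P.part_mem.mpr (Finset.mem_insert_self m S)
    apply Finset.ext
    intro a
    rw [Finset.mem_sup]
    constructor
    · rintro ⟨T, hT, haT⟩
      rcases Finset.mem_insert.mp hT with rfl | hT'
      · have h1 := Finset.mem_of_mem_erase haT
        have h2 := Finset.ne_of_mem_erase haT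
        rcases Finset.mem_insert.mp (P.le hB h1) with rfl | h
        · exact absurd rfl h2
        · exact h
      · have hTp := Finset.mem_of_mem_erase hT'
        have hTne := Finset.ne_of_mem_erase hT'
        rcases Finset.mem_insert.mp (P.le hTp haT) with rfl | h
        · exact absurd (P.eq_of_mem_parts hTp hB haT hmB) hTne
        · exact h
    · intro ha
      have ha' : a ∈ insert m S := Finset.mem_insert_of_mem ha
      have hane : a ≠ m := fun h => hm (h ▸ ha)
      by_cases hpart : P.part a = P.part m
      · exact ⟨(P.part m).erase m, Finset.mem_insert_self _ _,
          Finset.mem_erase.mpr ⟨hane, hpart ▸ P.mem_part ha'⟩⟩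
      · exact ⟨P.part a, Finset.mem_insert_of_mem
          (Finset.mem_erase.mpr ⟨hpart, P.part_mem.mpr ha'⟩), P.mem_part ha'⟩
  bot_notMem := by
    intro h
    rcases Finset.mem_insert.mp h with h' | h'
    · exact (Finset.nonempty_iff_ne_empty.mp (erase_part_nonempty hm P hP)) h'.symm
    · exact P.bot_notMem (Finset.mem_of_mem_erase h')

lemma shrinkP_parts (hm : m ∉ S) (P : Finpartition (insert m S)) (hP : {m} ∉ P.parts) :
    (shrinkP hm P hP).parts
      = insert ((P.part m).erase m) (P.parts.erase (P.part m)) := rfl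

lemma growP_part_m (hm : m ∉ S) (Q : Finpartition S) (j : ι) (hj : j ∈ S) :
    (growP hm Q j hj).part m = insert m (Q.part j) :=
  Finpartition.part_eq_of_mem _ (Finset.mem_insert_self _ _) (Finset.mem_insert_self _ _)

lemma growP_not_singleton (hm : m ∉ S) (Q : Finpartition S) (j : ι) (hj : j ∈ S) :
    {m} ∉ (growP hm Q j hj).parts := by
  intro h
  rcases Finset.mem_insert.mp h with h' | h'
  · have : j ∈ ({m} : Finset ι) := h' ▸ Finset.mem_insert_of_mem (Q.mem_part hj)
    rw [Finset.mem_singleton] at this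
    exact hm (this ▸ hj)
  · exact hm (Q.le (Finset.mem_of_mem_erase h') (Finset.mem_singleton_self m))

lemma erase_part_not_mem_erase (hm : m ∉ S) (P : Finpartition (insert m S)) :
    (P.part m).erase m ∉ P.parts.erase (P.part m) := by
  intro h
  have hmem := Finset.mem_of_mem_erase h
  have hne := Finset.ne_of_mem_erase h
  obtain ⟨x, hx⟩ := P.nonempty_of_mem_parts hmem
  have hx' : x ∈ P.part m := Finset.mem_of_mem_erase hx
  exact hne (P.eq_of_mem_parts hmem (P.part_mem.mpr (Finset.mem_insert_self m S)) hx hx')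

lemma shrink_grow (hm : m ∉ S) (Q : Finpartition S) (j : ι) (hj : j ∈ S)
    (h : {m} ∉ (growP hm Q j hj).parts) :
    shrinkP hm (growP hm Q j hj) h = Q := by
  have hmQ : m ∉ Q.part j := fun h' => hm (Q.le (Q.part_mem.mpr hj) h')
  have hX : insert m (Q.part j) ∉ Q.parts.erase (Q.part j) := by
    intro h'
    exact hm (Q.le (Finset.mem_of_mem_erase h') (Finset.mem_insert_self m _))
  apply Finpartition.ext
  rw [shrinkP_parts, growP_part_m, growP_parts]
  rw [Finset.erase_insert hmQ, Finset.erase_insert hX, Finset.insert_erase (Q.part_mem.mpr hj)]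

lemma mem_S_of_mem_erase_part (hm : m ∉ S) (P : Finpartition (insert m S)) {j : ι}
    (hj : j ∈ (P.part m).erase m) : j ∈ S := by
  have h1 := Finset.mem_of_mem_erase hj
  have h2 := Finset.ne_of_mem_erase hj
  rcases Finset.mem_insert.mp (P.le (P.part_mem.mpr (Finset.mem_insert_self m S)) h1) with h | h
  · exact absurd h h2
  · exact h

lemma grow_shrink (hm : m ∉ S) (P : Finpartition (insert m S)) (hP : {m} ∉ P.parts)
    {j : ι} (hj : j ∈ (P.part m).erase m) (hjS : j ∈ S) :
    growP hm (shrinkP hm P hP) j hjS = P := by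
  have hB : P.part m ∈ P.parts := P.part_mem.mpr (Finset.mem_insert_self m S)
  have hmB : m ∈ P.part m := P.mem_part (Finset.mem_insert_self m S)
  have hQpart : (shrinkP hm P hP).part j = (P.part m).erase m :=
    Finpartition.part_eq_of_mem _ (Finset.mem_insert_self _ _) hj
  apply Finpartition.ext
  rw [growP_parts, hQpart, shrinkP_parts,
    Finset.erase_insert (erase_part_not_mem_erase hm P),
    Finset.insert_erase hmB, Finset.insert_erase hB]

lemma case1 (θ : k) (R : A →ₗ[k] A) (s : ι → A) (hm : m ∉ S) :
    ∑ P ∈ univ.filter (fun P : Finpartition (insert m S) => {m} ∈ P.parts),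
      θ ^ ((insert m S).card - P.parts.card) •
        ∏ T ∈ P.parts, (T.card - 1).factorial • R (∏ j ∈ T, s j)
    = R (s m) * Esum θ R S s := by
  rw [Esum, Finset.mul_sum]
  refine Finset.sum_bij' (fun P hP => eraseSingleton hm P (by simpa using hP))
    (fun Q _ => extSingleton hm Q) (fun P hP => Finset.mem_univ _)
    (fun Q hQ => Finset.mem_filter.mpr ⟨Finset.mem_univ _,
      by rw [extSingleton_parts]; exact Finset.mem_insert_self _ _⟩) ?_ ?_ ?_
  · intro P hP
    apply Finpartition.ext
    rw [extSingleton_parts]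
    exact Finset.insert_erase (by simpa using hP)
  · intro Q hQ
    apply Finpartition.ext
    show (extSingleton hm Q).parts.erase {m} = Q.parts
    rw [extSingleton_parts]
    exact Finset.erase_insert (singleton_not_mem hm Q)
  · intro P hP
    have h' : {m} ∈ P.parts := by simpa using hP
    have hp : 1 ≤ P.parts.card := Finset.card_pos.mpr ⟨{m}, h'⟩
    have hexp : (insert m S).card - P.parts.card
        = S.card - ((eraseSingleton hm P (by simpa using hP)).parts.card) := by
      show _ = S.card - (P.parts.erase {m}).card
      rw [Finset.card_insert_of_notMem hm, Finset.card_erase_of_mem h']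
      omega
    rw [← Finset.mul_prod_erase P.parts _ h', hexp]
    have hsing : (({m} : Finset ι).card - 1).factorial • R (∏ j ∈ ({m} : Finset ι), s j)
        = R (s m) := by simp
    rw [hsing, mul_smul_comm]
    rfl

lemma weight_eq (θ : k) (R : A →ₗ[k] A) (s : ι → A) (hm : m ∉ S)
    (P : Finpartition (insert m S)) (hP : {m} ∉ P.parts) :
    θ ^ ((insert m S).card - P.parts.card) •
        ∏ T ∈ P.parts, (T.card - 1).factorial • R (∏ j ∈ T, s j)
      = θ • ∑ j ∈ (P.part m).erase m,
          θ ^ (S.card - (shrinkP hm P hP).parts.card) •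
            ∏ T ∈ (shrinkP hm P hP).parts,
              (T.card - 1).factorial •
                R (∏ i ∈ T, Function.update s j (s m * s j) i) := by
  have hB : P.part m ∈ P.parts := P.part_mem.mpr (Finset.mem_insert_self m S)
  have hmB : m ∈ P.part m := P.mem_part (Finset.mem_insert_self m S)
  have hne := erase_part_nonempty hm P hP
  have hnotmem := erase_part_not_mem_erase hm P
  set B := P.part m with hBdef
  have hbm1 : 1 ≤ (B.erase m).card := Finset.card_pos.mpr hne
  -- the summand is independent of j
  have hsummand : ∀ j ∈ B.erase m,
      (∏ T ∈ (shrinkP hm P hP).parts,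
        (T.card - 1).factorial • R (∏ i ∈ T, Function.update s j (s m * s j) i))
      = ((B.erase m).card - 1).factorial • R (∏ i ∈ B, s i)
          * ∏ T ∈ P.parts.erase B, (T.card - 1).factorial • R (∏ i ∈ T, s i) := by
    intro j hj
    have hjB : j ∈ B := Finset.mem_of_mem_erase hj
    rw [shrinkP_parts, Finset.prod_insert hnotmem]
    congr 1
    · have hprod : ∏ i ∈ B.erase m, Function.update s j (s m * s j) i = ∏ i ∈ B, s i := by
        rw [← Finset.mul_prod_erase _ _ hj, Function.update_self]
        have h2 : ∏ i ∈ (B.erase m).erase j, Function.update s j (s m * s j) i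
            = ∏ i ∈ (B.erase m).erase j, s i :=
          Finset.prod_congr rfl fun i hi =>
            Function.update_of_ne (Finset.ne_of_mem_erase hi) _ _
        rw [h2, mul_assoc, Finset.mul_prod_erase _ s hj, Finset.mul_prod_erase _ s hmB]
      rw [hprod]
    · refine Finset.prod_congr rfl fun T hT => ?_
      have hTp := Finset.mem_of_mem_erase hT
      have hTne := Finset.ne_of_mem_erase hT
      have hjT : j ∉ T := by
        intro hjT
        exact hTne (P.eq_of_mem_parts hTp hB hjT hjB)
      have : ∏ i ∈ T, Function.update s j (s m * s j) i = ∏ i ∈ T, s i :=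
        Finset.prod_congr rfl fun i hi =>
          Function.update_of_ne (ne_of_mem_of_not_mem hi hjT) _ _
      rw [this]
  rw [Finset.sum_congr rfl fun j hj => by rw [hsummand j hj]]
  rw [Finset.sum_const]
  -- cards
  have hq : (shrinkP hm P hP).parts.card = P.parts.card := by
    rw [shrinkP_parts, Finset.card_insert_of_notMem hnotmem, Finset.card_erase_of_mem hB]
    have : 1 ≤ P.parts.card := Finset.card_pos.mpr ⟨B, hB⟩
    omega
  have hple : P.parts.card ≤ S.card := by
    rw [← hq]; exact (shrinkP hm P hP).card_parts_le_card
  have hexp : (insert m S).card - P.parts.card = (S.card - P.parts.card) + 1 := by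
    rw [Finset.card_insert_of_notMem hm]; omega
  have hcardB : B.card - 1 = (B.erase m).card := by rw [Finset.card_erase_of_mem hmB]
  have hfact : (B.card - 1).factorial = (B.erase m).card * ((B.erase m).card - 1).factorial := by
    rw [hcardB, ← Nat.mul_factorial_pred (Nat.pos_iff_ne_zero.mp hbm1)]
  rw [← Finset.mul_prod_erase P.parts _ hB, hfact, hexp, hq]
  rw [mul_smul, smul_mul_assoc, smul_mul_assoc, pow_succ', mul_smul]
  rw [smul_comm (θ ^ (S.card - P.parts.card)) (B.erase m).card]

lemma case2 (θ : k) (R : A →ₗ[k] A) (s : ι → A) (hm : m ∉ S) :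
    ∑ P ∈ univ.filter (fun P : Finpartition (insert m S) => ¬({m} ∈ P.parts)),
      θ ^ ((insert m S).card - P.parts.card) •
        ∏ T ∈ P.parts, (T.card - 1).factorial • R (∏ j ∈ T, s j)
    = θ • ∑ j ∈ S, Esum θ R S (Function.update s j (s m * s j)) := by
  classical
  set f : ι × Finpartition S → A := fun x =>
    θ ^ (S.card - x.2.parts.card) • ∏ T ∈ x.2.parts,
      (T.card - 1).factorial • R (∏ i ∈ T, Function.update s x.1 (s m * s x.1) i) with hf
  set ψ : ι × Finpartition S → Finpartition (insert m S) := fun x =>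
    if h : x.1 ∈ S then growP hm x.2 x.1 h else ⊥ with hψdef
  have hsum : ∑ j ∈ S, Esum θ R S (Function.update s j (s m * s j))
      = ∑ x ∈ S ×ˢ (univ : Finset (Finpartition S)), f x := by
    rw [Finset.sum_product]
    rfl
  have hmaps : ∀ x ∈ S ×ˢ (univ : Finset (Finpartition S)),
      ψ x ∈ univ.filter (fun P : Finpartition (insert m S) => ¬({m} ∈ P.parts)) := by
    rintro ⟨j, Q⟩ hx
    have hjS : j ∈ S := (Finset.mem_product.mp hx).1
    rw [hψdef]
    simp only [dif_pos hjS]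
    exact Finset.mem_filter.mpr ⟨Finset.mem_univ _, growP_not_singleton hm Q j hjS⟩
  have key := Finset.sum_fiberwise_of_maps_to hmaps f
  rw [hsum, ← key, Finset.smul_sum]
  refine Finset.sum_congr rfl fun P hP' => ?_
  have hP : {m} ∉ P.parts := (Finset.mem_filter.mp hP').2
  have hfiber : (S ×ˢ (univ : Finset (Finpartition S))).filter (fun x => ψ x = P)
      = ((P.part m).erase m) ×ˢ ({shrinkP hm P hP} : Finset (Finpartition S)) := by
    apply Finset.ext
    rintro ⟨j, Q⟩
    simp only [Finset.mem_filter, Finset.mem_product, Finset.mem_univ, and_true,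
      Finset.mem_singleton]
    constructor
    · rintro ⟨hjS, hψ⟩
      rw [hψdef] at hψ
      simp only [dif_pos hjS] at hψ
      subst hψ
      refine ⟨?_, (shrink_grow hm Q j hjS _).symm⟩
      rw [growP_part_m]
      exact Finset.mem_erase.mpr ⟨fun h => hm (h ▸ hjS),
        Finset.mem_insert_of_mem (Q.mem_part hjS)⟩
    · rintro ⟨hj, rfl⟩
      have hjS : j ∈ S := mem_S_of_mem_erase_part hm P hj
      refine ⟨hjS, ?_⟩
      rw [hψdef]
      simp only [dif_pos hjS]
      exact grow_shrink hm P hP hj hjS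
  rw [hfiber, Finset.sum_product, Finset.sum_congr rfl
    (fun j hj => Finset.sum_singleton (fun Q => f (j, Q)) (shrinkP hm P hP))]
  exact weight_eq θ R s hm P hP

lemma Epart (θ : k) (R : A →ₗ[k] A) (s : ι → A) (hm : m ∉ S) :
    Esum θ R (insert m S) s
      = R (s m) * Esum θ R S s
        + θ • ∑ j ∈ S, Esum θ R S (Function.update s j (s m * s j)) := by
  rw [Esum, ← Finset.sum_filter_add_sum_filter_not univ
    (fun P : Finpartition (insert m S) => {m} ∈ P.parts), case1 θ R s hm, case2 θ R s hm]

lemma Esum_empty (θ : k) (R : A →ₗ[k] A) (s : ι → A) : Esum θ R (∅ : Finset ι) s = 1 := by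
  have hparts : ∀ P : Finpartition (∅ : Finset ι), P.parts = ∅ := by
    intro P
    rw [Finset.eq_empty_iff_forall_notMem]
    have hnb := P.bot_notMem
    rw [Finset.bot_eq_empty] at hnb
    intro T hT
    have h1 : T = ∅ := Finset.subset_empty.mp (P.le hT)
    rw [h1] at hT
    exact hnb hT
  haveI : Unique (Finpartition (∅ : Finset ι)) :=
    { default := ⊥, uniq := fun P => Finpartition.ext (by rw [hparts, hparts]) }
  rw [Esum, Fintype.sum_unique]
  simp [hparts]

lemma main (θ : k) (R : A →ₗ[k] A)
    (hR : ∀ a b : A, R a * R b = R (R a * b) + R (a * R b) - θ • R (a * b)) :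
    ∀ (l : List ι), l.Nodup → ∀ s : ι → A, Dsum R (l.map s) = Esum θ R l.toFinset s := by
  intro l
  induction l with
  | nil =>
    intro _ s
    show Dsum R [] = Esum θ R (∅ : Finset ι) s
    rw [Esum_empty, Dsum]
    simp [List.permutations', nestedRB]
  | cons m t ih =>
    intro h s
    obtain ⟨hmt, ht⟩ := List.nodup_cons.mp h
    rw [List.map_cons, Dsum_rec θ R hR, mergeL_map s (s m) t ht, List.map_map]
    have h2 : (t.map (Dsum R ∘ fun j => t.map (Function.update s j (s m * s j)))).sum
        = (t.map (fun j => Esum θ R t.toFinset (Function.update s j (s m * s j)))).sum :=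
      congrArg _ (List.map_congr_left fun j _ => ih ht _)
    rw [h2, ← List.sum_toFinset _ ht, ih ht s,
      ← Epart θ R s (mt List.mem_toFinset.mp hmt), List.toFinset_cons]

end BSaux

/-- **Bohnenblust–Spitzer formula of weight `θ`.** For a Rota–Baxter operator `R` of weight
`θ` on a commutative algebra, `n ≥ 1` and `s₁, …, sₙ`:
`Σ_{σ ∈ Sₙ} R(s_{σ(1)}R(s_{σ(2)}⋯R(s_{σ(n)})⋯)) =
 Σ_{𝒯} θ^{n−|𝒯|} ∏_{T ∈ 𝒯} (|T|−1)!·R(∏_{j∈T} s_j)`,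
where `𝒯` runs over set partitions of `{1,…,n}`. -/
theorem bohnenblust_spitzer (θ : k) (R : A →ₗ[k] A)
    (hR : ∀ a b : A, R a * R b = R (R a * b) + R (a * R b) - θ • R (a * b))
    (n : ℕ) (hn : 1 ≤ n) (s : Fin n → A) :
    ∑ σ : Equiv.Perm (Fin n), nestedRB R (List.ofFn fun i => s (σ i)) =
      ∑ P : Finpartition (Finset.univ : Finset (Fin n)),
        θ ^ (n - P.parts.card) •
          ∏ T ∈ P.parts, (T.card - 1).factorial • R (∏ j ∈ T, s j) := by
  classical
  have hmain := BSaux.main θ R hR (List.finRange n) (List.nodup_finRange n) s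
  have hbridge : ∑ σ : Equiv.Perm (Fin n), nestedRB R (List.ofFn fun i => s (σ i))
      = BSaux.Dsum R ((List.finRange n).map s) := by
    calc ∑ σ : Equiv.Perm (Fin n), nestedRB R (List.ofFn fun i => s (σ i))
        = ∑ σ : Equiv.Perm (Fin n), (nestedRB R ∘ List.map s) (List.ofFn σ) := by
          refine Finset.sum_congr rfl fun σ _ => ?_
          rw [Function.comp_apply, List.map_ofFn]
          rfl
      _ = ((Finset.univ.val.map (fun σ : Equiv.Perm (Fin n) => List.ofFn σ)).map
            (nestedRB R ∘ List.map s)).sum := by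
          rw [Multiset.map_map]
          rfl
      _ = (((List.finRange n).permutations').map (nestedRB R ∘ List.map s)).sum := by
          rw [BSaux.perm_multiset, Multiset.map_coe, Multiset.sum_coe]
      _ = BSaux.Dsum R ((List.finRange n).map s) := by
          rw [BSaux.Dsum, ← List.map_permutations', List.map_map]
  rw [hbridge, hmain, BSaux.Esum, List.toFinset_finRange]
  simp [Finset.card_univ]
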